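/- If a strictly feasible pair exists, then at every minimizer (p*, y*) of the network delay, whenever y*_q > 0 on an energy link q with start node i and end node j, one has g_l(p*_l) = α_q · g_m(p*_m) for every data link l outgoing from i and every data link m outgoing from j, where g_l(p) = (t_l/(2σ_l)) · ((1/2)·ln(1 + p/σ_l) − t_l)^{−2} · (1 + p/σ_l)^{−1}. -/

import Mathlib

open BigOperators ENNReal

/-- A single-slot energy harvesting network with energy cooperation: nodes `N`,
data links `L` (each with a start node, fixed flow `t l > 0` and noise power `σ l > 0`),
energy links `Q` (each with a start node, end node and transfer efficiency `α q ∈ (0,1]`),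
and harvested energies `E n ≥ 0`. -/
structure Net where
  N : Type
  L : Type
  Q : Type
  [fintypeN : Fintype N]
  [fintypeL : Fintype L]
  [fintypeQ : Fintype Q]
  [decEqN : DecidableEq N]
  startD : L → N
  startE : Q → N
  endE : Q → N
  α : Q → ℝ
  t : L → ℝ
  σ : L → ℝ
  E : N → ℝ
  hα : ∀ q, 0 < α q ∧ α q ≤ 1
  ht : ∀ l, 0 < t l
  hσ : ∀ l, 0 < σ l
  hE : ∀ n, 0 ≤ E n

attribute [instance] Net.fintypeN Net.fintypeL Net.fintypeQ Net.decEqN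

/-- A pair `(p, y)` is feasible: nonnegative energy transfers, link powers at least
`σ_l (e^{2 t_l} − 1)`, and the energy constraint at every node. -/
def Net.Feasible (net : Net) (p : net.L → ℝ) (y : net.Q → ℝ) : Prop :=
  (∀ q, 0 ≤ y q) ∧
  (∀ l, net.σ l * (Real.exp (2 * net.t l) - 1) ≤ p l) ∧
  (∀ n : net.N,
    (∑ l ∈ Finset.univ.filter (fun l => net.startD l = n), p l) +
      (∑ q ∈ Finset.univ.filter (fun q => net.startE q = n), y q) ≤
    net.E n + ∑ q ∈ Finset.univ.filter (fun q => net.endE q = n), net.α q * y q)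

/-- Strict feasibility: feasible with `p_l > σ_l (e^{2 t_l} − 1)` on every data link. -/
def Net.StrictFeasible (net : Net) (p : net.L → ℝ) (y : net.Q → ℝ) : Prop :=
  net.Feasible p y ∧ ∀ l, net.σ l * (Real.exp (2 * net.t l) - 1) < p l

/-- The network delay `D(p) = ∑_l t_l / ((1/2)·ln(1 + p_l/σ_l) − t_l)`, with the
convention that it is `+∞` if `(1/2)·ln(1 + p_l/σ_l) ≤ t_l` for some link `l`. -/
noncomputable def Net.Delay (net : Net) (p : net.L → ℝ) : ℝ≥0∞ :=
  if ∀ l, net.t l < (1 / 2) * Real.log (1 + p l / net.σ l) then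
    ENNReal.ofReal (∑ l, net.t l / ((1 / 2) * Real.log (1 + p l / net.σ l) - net.t l))
  else ⊤

/-- A minimizer of the network delay over feasible pairs. -/
def Net.IsMinimizer (net : Net) (p : net.L → ℝ) (y : net.Q → ℝ) : Prop :=
  net.Feasible p y ∧ ∀ p' y', net.Feasible p' y' → net.Delay p ≤ net.Delay p'

/-- The marginal quantity
`g(p) = (t/(2σ)) · ((1/2)·ln(1 + p/σ) − t)^{−2} · (1 + p/σ)^{−1}`. -/
noncomputable def gMarg (t σ p : ℝ) : ℝ :=
  t / (2 * σ) / ((1 / 2) * Real.log (1 + p / σ) - t) ^ 2 / (1 + p / σ)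

lemma lt_log_of_lt (t σ p : ℝ) (hσ : 0 < σ)
    (h : σ * (Real.exp (2 * t) - 1) < p) :
    t < (1/2) * Real.log (1 + p / σ) := by
  have h1 : Real.exp (2 * t) < 1 + p / σ := by
    have h2 : Real.exp (2 * t) - 1 < p / σ := by
      rw [lt_div_iff₀ hσ]; nlinarith
    linarith
  have := Real.log_lt_log (Real.exp_pos _) h1
  rw [Real.log_exp] at this
  linarith

lemma lt_of_lt_log (t σ p : ℝ) (hσ : 0 < σ)
    (hpos : 0 < 1 + p / σ) (h : t < (1/2) * Real.log (1 + p / σ)) :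
    σ * (Real.exp (2 * t) - 1) < p := by
  have h2 : 2 * t < Real.log (1 + p / σ) := by linarith
  have h3 : Real.exp (2 * t) < 1 + p / σ := (Real.lt_log_iff_exp_lt hpos).1 h2
  have h4 : Real.exp (2 * t) - 1 < p / σ := by linarith
  have h5 := (lt_div_iff₀ hσ).1 h4
  linarith

lemma hasDerivAt_term (t σ p : ℝ) (hσ : 0 < σ) (hpos : 0 < 1 + p / σ)
    (hden : (1/2) * Real.log (1 + p / σ) - t ≠ 0) :
    HasDerivAt (fun x => t / ((1/2) * Real.log (1 + x / σ) - t)) (-gMarg t σ p) p := by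
  have hinner : HasDerivAt (fun x : ℝ => 1 + x / σ) (1/σ) p := by
    simpa using ((hasDerivAt_id p).div_const σ).const_add 1
  have hlog : HasDerivAt (fun x : ℝ => Real.log (1 + x / σ)) ((1 + p/σ)⁻¹ * (1/σ)) p :=
    (Real.hasDerivAt_log hpos.ne').comp (h₂ := Real.log) (h := fun x : ℝ => 1 + x / σ) p hinner
  have hu : HasDerivAt (fun x : ℝ => (1/2) * Real.log (1 + x / σ) - t)
      ((1/2) * ((1 + p/σ)⁻¹ * (1/σ))) p := (hlog.const_mul (1/2)).sub_const t
  have hdiv := (hasDerivAt_const p t).fun_div hu hden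
  refine hdiv.congr_deriv ?_
  unfold gMarg
  ring

/-- If a strictly feasible pair exists, then at every minimizer
`(p*, y*)` of the network delay, whenever `y*_q > 0` on an energy link `q` from
node `i` to node `j`, one has `g_l(p*_l) = α_q · g_m(p*_m)` for every data link
`l` outgoing from `i` and every data link `m` outgoing from `j`. -/
theorem minimizer_energy_transfer_marginals (net : Net)
    (hsf : ∃ p y, net.StrictFeasible p y)
    (pstar : net.L → ℝ) (ystar : net.Q → ℝ)
    (hmin : net.IsMinimizer pstar ystar) :
    ∀ q : net.Q, 0 < ystar q →
      ∀ l m : net.L, net.startD l = net.startE q → net.startD m = net.endE q →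
        gMarg (net.t l) (net.σ l) (pstar l) =
          net.α q * gMarg (net.t m) (net.σ m) (pstar m) := by
  classical
  intro q hyq l m hl hm
  obtain ⟨p0, y0, hf0, hst0⟩ := hsf
  have hcond0 : ∀ k, net.t k < (1/2) * Real.log (1 + p0 k / net.σ k) := fun k =>
    lt_log_of_lt _ _ _ (net.hσ k) (hst0 k)
  have hD0 : net.Delay p0 ≠ ⊤ := by
    rw [Net.Delay, if_pos (by exact_mod_cast hcond0)]; exact ofReal_ne_top
  have hDp : net.Delay pstar ≠ ⊤ := by
    intro h
    exact hD0 (top_le_iff.1 (h ▸ hmin.2 p0 y0 hf0))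
  have hcond : ∀ k, net.t k < (1/2) * Real.log (1 + pstar k / net.σ k) := by
    by_contra hc
    exact hDp (by rw [Net.Delay, if_neg (by exact_mod_cast hc)])
  have hppos : ∀ k, 0 < 1 + pstar k / net.σ k := by
    intro k
    have h1 := hmin.1.2.1 k
    have h2 : (1:ℝ) < Real.exp (2 * net.t k) := by
      calc (1:ℝ) = Real.exp 0 := Real.exp_zero.symm
        _ < Real.exp (2 * net.t k) := Real.exp_lt_exp.2 (by nlinarith [net.ht k])
    have h3 : 0 < pstar k := lt_of_lt_of_le (by nlinarith [net.hσ k]) h1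
    have := div_pos h3 (net.hσ k)
    linarith
  have hdenpos : ∀ k, 0 < (1/2) * Real.log (1 + pstar k / net.σ k) - net.t k := by
    intro k; have := hcond k; linarith
  set c : net.L → ℝ := fun k =>
    (if k = l then (1:ℝ) else 0) - net.α q * (if k = m then 1 else 0) with hcdef
  set P : ℝ → net.L → ℝ := fun δ k => pstar k + δ * c k with hPdef
  set Y : ℝ → net.Q → ℝ := fun δ r => ystar r - δ * (if r = q then (1:ℝ) else 0) with hYdef
  have hP0 : ∀ k, P 0 k = pstar k := by intro k; simp [hPdef]
  set h : ℝ → ℝ := fun δ =>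
    ∑ k, net.t k / ((1/2) * Real.log (1 + P δ k / net.σ k) - net.t k) with hhdef
  -- eventual conditions
  have hev1 : ∀ᶠ δ in nhds (0:ℝ), ∀ k,
      0 < 1 + P δ k / net.σ k ∧ net.t k < (1/2) * Real.log (1 + P δ k / net.σ k) := by
    rw [Filter.eventually_all]
    intro k
    have hca : ContinuousAt (fun δ : ℝ => 1 + P δ k / net.σ k) 0 := by
      simp only [hPdef]; fun_prop
    have hne : (1 : ℝ) + P 0 k / net.σ k ≠ 0 := by rw [hP0]; exact (hppos k).ne'
    have hcl : ContinuousAt (fun δ : ℝ => (1/2) * Real.log (1 + P δ k / net.σ k)) 0 :=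
      continuousAt_const.mul (hca.log hne)
    have h1 : ∀ᶠ δ in nhds (0:ℝ), 0 < 1 + P δ k / net.σ k := by
      have := continuousAt_const.eventually_lt hca (by rw [hP0]; exact hppos k)
      simpa using this
    have h2 : ∀ᶠ δ in nhds (0:ℝ), net.t k < (1/2) * Real.log (1 + P δ k / net.σ k) := by
      have := continuousAt_const.eventually_lt hcl (by rw [hP0]; exact hcond k)
      simpa using this
    filter_upwards [h1, h2] with δ hδ1 hδ2 using ⟨hδ1, hδ2⟩
  have hev2 : ∀ᶠ δ in nhds (0:ℝ), δ < ystar q := by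
    have := continuousAt_id.eventually_lt (continuousAt_const : ContinuousAt (fun _ : ℝ => ystar q) 0) (by simpa using hyq)
    simpa using this
  -- feasibility of perturbation
  have hfeasδ : ∀ δ : ℝ,
      (∀ k, 0 < 1 + P δ k / net.σ k ∧ net.t k < (1/2) * Real.log (1 + P δ k / net.σ k)) →
      δ ≤ ystar q → net.Feasible (P δ) (Y δ) := by
    intro δ hA hδy
    refine ⟨?_, ?_, ?_⟩
    · intro r
      by_cases hr : r = q
      · have : Y δ r = ystar q - δ := by simp [hYdef, hr]
        rw [this]; linarith
      · simp only [hYdef, if_neg hr, mul_zero, sub_zero]; exact hmin.1.1 r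
    · intro k
      exact le_of_lt (lt_of_lt_log _ _ _ (net.hσ k) (hA k).1 (hA k).2)
    · intro n
      have hnode := hmin.1.2.2 n
      have e1 : ∑ k ∈ Finset.univ.filter (fun k => net.startD k = n), P δ k
          = (∑ k ∈ Finset.univ.filter (fun k => net.startD k = n), pstar k)
            + ((if net.startE q = n then δ else 0) - net.α q * (if net.endE q = n then δ else 0)) := by
        simp only [hPdef, hcdef, mul_sub, mul_ite, mul_one, mul_zero,
          Finset.sum_add_distrib, Finset.sum_sub_distrib, Finset.sum_ite_eq',
          Finset.mem_filter, Finset.mem_univ, true_and, hl, hm]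
        split_ifs <;> ring
      have e2 : ∑ r ∈ Finset.univ.filter (fun r => net.startE r = n), Y δ r
          = (∑ r ∈ Finset.univ.filter (fun r => net.startE r = n), ystar r)
            - (if net.startE q = n then δ else 0) := by
        simp only [hYdef, mul_ite, mul_one, mul_zero, Finset.sum_sub_distrib,
          Finset.sum_ite_eq', Finset.mem_filter, Finset.mem_univ, true_and]
      have e3 : ∑ r ∈ Finset.univ.filter (fun r => net.endE r = n), net.α r * Y δ r
          = (∑ r ∈ Finset.univ.filter (fun r => net.endE r = n), net.α r * ystar r)
            - net.α q * (if net.endE q = n then δ else 0) := by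
        simp only [hYdef, mul_sub, mul_ite, mul_one, mul_zero, Finset.sum_sub_distrib,
          Finset.sum_ite_eq', Finset.mem_filter, Finset.mem_univ, true_and] <;>
          (split_ifs <;> ring)
      rw [e1, e2, e3]
      split_ifs <;> linarith
  -- localize the minimum
  have hDpstar : net.Delay pstar = ENNReal.ofReal (h 0) := by
    rw [Net.Delay, if_pos (by exact_mod_cast hcond)]
    congr 1
    apply Finset.sum_congr rfl
    intro k _
    rw [hP0]
  have hloc : IsLocalMin h 0 := by
    filter_upwards [hev1, hev2] with δ hA hδ
    have hfe := hfeasδ δ hA (le_of_lt hδ)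
    have hle := hmin.2 (P δ) (Y δ) hfe
    rw [hDpstar, Net.Delay, if_pos (by exact_mod_cast fun k => (hA k).2)] at hle
    have hnn : 0 ≤ h δ := by
      apply Finset.sum_nonneg
      intro k _
      exact div_nonneg (net.ht k).le (by linarith [(hA k).2])
    exact (ENNReal.ofReal_le_ofReal_iff hnn).1 hle
  -- derivative of h at 0
  have hder : HasDerivAt h (∑ k, -gMarg (net.t k) (net.σ k) (pstar k) * c k) 0 := by
    apply HasDerivAt.fun_sum
    intro k _
    have hinner : HasDerivAt (fun δ : ℝ => pstar k + δ * c k) (c k) 0 := by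
      simpa using ((hasDerivAt_id (0:ℝ)).mul_const (c k)).const_add (pstar k)
    have houter : HasDerivAt (fun x => net.t k / ((1/2) * Real.log (1 + x / net.σ k) - net.t k))
        (-gMarg (net.t k) (net.σ k) (pstar k)) ((fun δ : ℝ => pstar k + δ * c k) 0) := by
      simpa using hasDerivAt_term (net.t k) (net.σ k) (pstar k) (net.hσ k) (hppos k)
        (ne_of_gt (hdenpos k))
    exact houter.comp (h₂ := fun x => net.t k / ((1/2) * Real.log (1 + x / net.σ k) - net.t k))
      (h := fun δ : ℝ => pstar k + δ * c k) 0 hinner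
  have hzero : deriv h 0 = 0 := hloc.deriv_eq_zero
  rw [hder.deriv] at hzero
  have hsum : ∑ k, -gMarg (net.t k) (net.σ k) (pstar k) * c k
      = -gMarg (net.t l) (net.σ l) (pstar l) + net.α q * gMarg (net.t m) (net.σ m) (pstar m) := by
    have key : ∀ k : net.L, -gMarg (net.t k) (net.σ k) (pstar k) * c k
        = (if k = l then -gMarg (net.t l) (net.σ l) (pstar l) else 0)
          + (if k = m then net.α q * gMarg (net.t m) (net.σ m) (pstar m) else 0) := by
      intro k
      simp only [hcdef]
      by_cases h1 : k = l <;> by_cases h2 : k = m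
      · subst h1; subst h2; simp; ring
      · subst h1; simp [h2]
      · subst h2; simp [h1]; ring
      · simp [h1, h2]
    rw [Finset.sum_congr rfl (fun k _ => key k), Finset.sum_add_distrib,
      Finset.sum_ite_eq' Finset.univ l, Finset.sum_ite_eq' Finset.univ m]
    simp
  rw [hsum] at hzero
  linarith
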